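/- For every ε > 0 there exists a finite set P of at least 2 points in ℝ² such that, with distances given by the L∞ norm (‖(x,y)‖_∞ = max(|x|, |y|)), every Hamiltonian path on P has length at least (2 − ε) · w(T_min), where T_min is a minimum spanning tree of P under the L∞ distance. -/

import Mathlib

open scoped Classical

/-- The weight of the graph `G` with respect to the (symmetric) weight function `w`. -/
noncomputable def weightOf {V : Type*} [Fintype V] (G : SimpleGraph V) (w : V → V → ℝ) : ℝ :=
  (∑ u : V, ∑ v : V, if G.Adj u v then w u v else 0) / 2

/-- The L∞ distance between two points of `ℝ²`. -/
noncomputable def ptDist (p q : ℝ × ℝ) : ℝ := max |p.1 - q.1| |p.2 - q.2|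

/-- The length of the path visiting the points of the list `l` in order. -/
noncomputable def pathLength (l : List (ℝ × ℝ)) : ℝ :=
  ((l.zip l.tail).map (fun pq => ptDist pq.1 pq.2)).sum

variable {V : Type*}

/-- Graph defined by a parent function. -/
def parentGraph (par : V → V) : SimpleGraph V where
  Adj u v := u ≠ v ∧ (par u = v ∨ par v = u)
  symm := by
    refine ⟨fun u v h => ?_⟩
    exact ⟨Ne.symm h.1, h.2.symm⟩
  loopless := by refine ⟨fun v h => ?_⟩; exact h.1 rfl

lemma parentGraph_isTree [Fintype V] (par : V → V) (rk : V → ℕ) (r : V)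
    (hr : par r = r) (hd : ∀ v, v ≠ r → rk (par v) < rk v) :
    (parentGraph par).IsTree := by
  classical
  constructor
  · -- connected
    have hreach : ∀ n (v : V), rk v ≤ n → (parentGraph par).Reachable v r := by
      intro n
      induction n with
      | zero =>
        intro v hv
        by_cases h : v = r
        · subst h; exact SimpleGraph.Reachable.refl v
        · exact absurd (Nat.lt_of_lt_of_le (hd v h) hv) (Nat.not_lt_zero _)
      | succ n ih =>
        intro v hv
        by_cases h : v = r
        · subst h; exact SimpleGraph.Reachable.refl v
        · have hlt := hd v h
          have hne : v ≠ par v := by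
            intro he
            rw [← he] at hlt
            exact lt_irrefl _ hlt
          have hadj : (parentGraph par).Adj v (par v) := ⟨hne, Or.inl rfl⟩
          exact hadj.reachable.trans (ih (par v) (by omega))
    haveI : Nonempty V := ⟨r⟩
    exact SimpleGraph.Connected.mk
      (fun u v => (hreach (rk u) u le_rfl).trans (hreach (rk v) v le_rfl).symm)
  · -- acyclic
    intro v c hc
    have hvmem : v ∈ c.support := c.start_mem_support
    obtain ⟨u, humem, humax⟩ := Finset.exists_max_image c.support.toFinset rk
      ⟨v, List.mem_toFinset.mpr hvmem⟩
    rw [List.mem_toFinset] at humem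
    have hc' := hc.rotate humem
    have hsup : ∀ x ∈ (c.rotate u humem).support, rk x ≤ rk u := by
      intro x hx
      rw [(c.rotate u humem).support_eq_cons] at hx
      rcases List.mem_cons.mp hx with h | h
      · exact h ▸ le_rfl
      · have hrot := c.support_rotate u humem
        have hx2 : x ∈ c.support.tail := hrot.mem_iff.mp h
        have hx3 : x ∈ c.support := by
          rw [c.support_eq_cons]
          exact List.mem_cons_of_mem _ hx2
        exact humax x (List.mem_toFinset.mpr hx3)
    generalize hgen : c.rotate u humem = c' at hc' hsup
    clear hgen hvmem humem hc
    have key : ∀ (x : V), (parentGraph par).Adj u x → x ∈ c'.support → par u = x := by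
      intro x h1 hxs
      rcases h1.2 with h | h
      · exact h
      · exfalso
        by_cases hx : x = r
        · subst hx
          rw [hr] at h
          exact h1.1 h.symm
        · have := hd x hx
          rw [h] at this
          exact absurd (hsup x hxs) (not_le.mpr this)
    cases c' with
    | nil => exact hc'.ne_nil rfl
    | cons hadj q =>
      rename_i x
      have hx : par u = x := key x hadj (by
        rw [SimpleGraph.Walk.support_cons]
        exact List.mem_cons_of_mem _ q.start_mem_support)
      cases hq : q.reverse with
      | nil =>
        have hqnil : q = SimpleGraph.Walk.nil := by
          have := congrArg SimpleGraph.Walk.reverse hq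
          rwa [SimpleGraph.Walk.reverse_reverse, SimpleGraph.Walk.reverse_nil] at this
        exact hadj.1 (by cases hqnil; rfl)
      | cons hadj2 q2 =>
        rename_i y
        have hy : par u = y := by
          apply key y hadj2
          rw [SimpleGraph.Walk.support_cons]
          apply List.mem_cons_of_mem
          have hyq : y ∈ q.reverse.support := by
            rw [hq, SimpleGraph.Walk.support_cons]
            exact List.mem_cons_of_mem _ q2.start_mem_support
          rw [SimpleGraph.Walk.support_reverse, List.mem_reverse] at hyq
          exact hyq
        have hxy : x = y := by rw [← hx, hy]
        subst hxy
        have hmem : s(u, x) ∈ q.edges := by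
          have h5 : s(u, x) ∈ q.reverse.edges := by
            rw [hq, SimpleGraph.Walk.edges_cons]
            exact List.mem_cons_self
          rwa [SimpleGraph.Walk.edges_reverse, List.mem_reverse] at h5
        have hnodup := hc'.edges_nodup
        rw [SimpleGraph.Walk.edges_cons] at hnodup
        exact (List.nodup_cons.mp hnodup).1 hmem

lemma weightOf_parentGraph_le {V : Type*} [Fintype V] (par : V → V) (w : V → V → ℝ)
    (hw0 : ∀ u v, 0 ≤ w u v) (hsymm : ∀ u v, w u v = w v u) :
    weightOf (parentGraph par) w ≤ ∑ v : V, w v (par v) := by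
  classical
  have key : ∀ u v : V, (if (parentGraph par).Adj u v then w u v else 0) ≤
      (if par u = v then w u v else 0) + (if par v = u then w u v else 0) := by
    intro u v
    by_cases h : (parentGraph par).Adj u v
    · rw [if_pos h]
      rcases h.2 with h2 | h2
      · rw [if_pos h2]
        have : (0:ℝ) ≤ (if par v = u then w u v else 0) := by
          split <;> [exact hw0 u v; exact le_rfl]
        linarith
      · rw [if_pos h2]
        have : (0:ℝ) ≤ (if par u = v then w u v else 0) := by
          split <;> [exact hw0 u v; exact le_rfl]
        linarith
    · rw [if_neg h]
      have a1 : (0:ℝ) ≤ (if par u = v then w u v else 0) := by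
        split
        · exact hw0 u v
        · exact le_rfl
      have a2 : (0:ℝ) ≤ (if par v = u then w u v else 0) := by
        split
        · exact hw0 u v
        · exact le_rfl
      linarith
  have h1 : (∑ u : V, ∑ v : V, if (parentGraph par).Adj u v then w u v else 0) ≤
      (∑ u : V, ∑ v : V, ((if par u = v then w u v else 0) + (if par v = u then w u v else 0))) :=
    Finset.sum_le_sum (fun u _ => Finset.sum_le_sum (fun v _ => key u v))
  have h2 : ∀ u : V, (∑ v : V, if par u = v then w u v else 0) = w u (par u) := by
    intro u
    rw [Finset.sum_ite_eq Finset.univ (par u) (fun v => w u v)]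
    simp
  have h3 : (∑ u : V, ∑ v : V, if par v = u then w u v else 0) = ∑ v : V, w v (par v) := by
    rw [Finset.sum_comm]
    refine Finset.sum_congr rfl (fun v _ => ?_)
    rw [Finset.sum_ite_eq Finset.univ (par v) (fun u => w u v)]
    simp [hsymm]
  rw [weightOf]
  rw [div_le_iff₀ (by norm_num : (0:ℝ) < 2)]
  calc (∑ u : V, ∑ v : V, if (parentGraph par).Adj u v then w u v else 0)
      ≤ ∑ u : V, ∑ v : V, ((if par u = v then w u v else 0) + (if par v = u then w u v else 0)) := h1
    _ = (∑ u : V, ∑ v : V, if par u = v then w u v else 0)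
        + (∑ u : V, ∑ v : V, if par v = u then w u v else 0) := by
          rw [← Finset.sum_add_distrib]
          exact Finset.sum_congr rfl (fun u _ => Finset.sum_add_distrib)
    _ = (∑ u : V, w u (par u)) + ∑ v : V, w v (par v) := by
          rw [h3]
          congr 1
          exact Finset.sum_congr rfl (fun u _ => h2 u)
    _ = (∑ v : V, w v (par v)) * 2 := by ring

lemma ptDist_comm (p q : ℝ × ℝ) : ptDist p q = ptDist q p := by
  unfold ptDist
  rw [abs_sub_comm p.1 q.1, abs_sub_comm p.2 q.2]

lemma ptDist_nonneg (p q : ℝ × ℝ) : 0 ≤ ptDist p q :=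
  le_trans (abs_nonneg _) (le_max_left _ _)

/-- The point of scale `k` and index `j`. -/
noncomputable def spt (R K k j : ℕ) : ℝ × ℝ :=
  (2 * j * (R:ℝ)^(K-1-k), (-1:ℝ)^k * (R:ℝ)^(K-1-k))

lemma spt_snd_abs (R K k j : ℕ) : |(spt R K k j).2| = (R:ℝ)^(K-1-k) := by
  unfold spt
  rw [abs_mul, abs_pow, abs_neg, abs_one, one_pow, one_mul,
    abs_of_nonneg (by positivity : (0:ℝ) ≤ (R:ℝ)^(K-1-k))]

lemma rpow_inj {R : ℕ} (hR : 2 ≤ R) {a b : ℕ} (h : (R:ℝ)^a = (R:ℝ)^b) : a = b := by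
  have : ((R^a : ℕ) : ℝ) = ((R^b : ℕ) : ℝ) := by push_cast; exact h
  exact Nat.pow_right_injective hR (Nat.cast_injective this)

lemma spt_inj {R K k j k' j' : ℕ} (hR : 2 ≤ R) (hk : k < K) (hk' : k' < K)
    (h : spt R K k j = spt R K k' j') : k = k' ∧ j = j' := by
  have h2 := congrArg (fun p : ℝ × ℝ => |p.2|) h
  simp only [spt_snd_abs] at h2
  have hkk : k = k' := by
    have := rpow_inj hR h2
    omega
  subst hkk
  have h1 := congrArg Prod.fst h
  unfold spt at h1
  simp only at h1
  have hp : (0:ℝ) < (R:ℝ)^(K-1-k) := by positivity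
  have : (j:ℝ) = (j':ℝ) := by
    have := mul_right_cancel₀ (ne_of_gt hp) h1
    linarith
  exact ⟨rfl, Nat.cast_injective this⟩

/-- The key charge inequality, ordered case. -/
lemma charge_ordered {R K k j k' j' : ℕ} (hR : 2 ≤ R) (hkk : k ≤ k') (hk' : k' < K)
    (hne : spt R K k j ≠ spt R K k' j') :
    (1 - 2/(R:ℝ)^2) * (|(spt R K k j).2| + |(spt R K k' j').2|)
      ≤ ptDist (spt R K k j) (spt R K k' j') := by
  have hR1 : (1:ℝ) ≤ (R:ℝ) := by exact_mod_cast Nat.one_le_of_lt hR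
  have hR0 : (0:ℝ) < (R:ℝ) := by linarith
  have hR2pos : (0:ℝ) < (R:ℝ)^2 := by positivity
  have hR2 : (4:ℝ) ≤ (R:ℝ)^2 := by nlinarith [show (2:ℝ) ≤ (R:ℝ) by exact_mod_cast hR]
  have hγ1 : (1 - 2/(R:ℝ)^2) ≤ 1 := by
    have : (0:ℝ) ≤ 2/(R:ℝ)^2 := by positivity
    linarith
  set h := (R:ℝ)^(K-1-k) with hh
  set h' := (R:ℝ)^(K-1-k') with hh'
  have hpos : 0 < h := by positivity
  have hpos' : 0 < h' := by positivity
  have hle : h' ≤ h := by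
    rw [hh, hh']
    exact pow_le_pow_right₀ hR1 (by omega)
  rw [spt_snd_abs, spt_snd_abs, ← hh, ← hh']
  rcases eq_or_lt_of_le hkk with heq | hlt
  · -- same scale
    subst heq
    have hj : j ≠ j' := by
      intro hjj
      exact hne (by rw [hjj])
    have hdx : (2:ℝ) * h ≤ |(spt R K k j).1 - (spt R K k j').1| := by
      unfold spt
      simp only
      rw [← hh]
      have : 2*(j:ℝ)*h - 2*(j':ℝ)*h = 2*h*((j:ℝ) - (j':ℝ)) := by ring
      rw [this, abs_mul, abs_of_nonneg (by positivity : (0:ℝ) ≤ 2*h)]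
      have habs : (1:ℝ) ≤ |(j:ℝ) - (j':ℝ)| := by
        rcases Nat.lt_or_ge j j' with hlt | hge
        · rw [abs_of_nonpos (by
            have : (j:ℝ) ≤ (j':ℝ) := by exact_mod_cast Nat.le_of_lt hlt
            linarith)]
          have : (j:ℝ) + 1 ≤ (j':ℝ) := by exact_mod_cast hlt
          linarith
        · have hgt : j' < j := lt_of_le_of_ne hge (Ne.symm hj)
          rw [abs_of_nonneg (by
            have : (j':ℝ) ≤ (j:ℝ) := by exact_mod_cast Nat.le_of_lt hgt
            linarith)]
          have : (j':ℝ) + 1 ≤ (j:ℝ) := by exact_mod_cast hgt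
          linarith
      nlinarith
    refine le_trans ?_ (le_trans hdx (le_max_left _ _))
    nlinarith
  · -- different scales
    have hsplit : ((-1:ℝ))^k' = (-1:ℝ)^k * (-1:ℝ)^(k'-k) := by
      rw [← pow_add]
      congr 1
      omega
    have habs1 : |(-1:ℝ)^k| = 1 := by
      rw [abs_pow, abs_neg, abs_one, one_pow]
    rcases Nat.even_or_odd (k'-k) with hev | hodd
    · -- same sign; gap at least 2
      have hgap : k + 2 ≤ k' := by
        rcases hev with ⟨t, ht⟩
        omega
      have hstep : (R:ℝ)^2 * h' ≤ h := by
        rw [hh, hh', ← pow_add]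
        exact pow_le_pow_right₀ hR1 (by omega)
      have hdy : |(spt R K k j).2 - (spt R K k' j').2| = h - h' := by
        unfold spt
        simp only
        rw [hsplit, hev.neg_one_pow, mul_one, ← hh, ← hh']
        have : (-1:ℝ)^k * h - (-1:ℝ)^k * h' = (-1:ℝ)^k * (h - h') := by ring
        rw [this, abs_mul, habs1, one_mul, abs_of_nonneg (by linarith)]
      have key : 2*h' ≤ 2/(R:ℝ)^2 * (h + h') := by
        rw [div_mul_eq_mul_div, le_div_iff₀ hR2pos]
        nlinarith
      refine le_trans ?_ (le_trans (le_of_eq hdy.symm) (le_max_right _ _))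
      nlinarith
    · -- opposite signs
      have hdy : |(spt R K k j).2 - (spt R K k' j').2| = h + h' := by
        unfold spt
        simp only
        rw [hsplit, hodd.neg_one_pow, mul_neg_one, ← hh, ← hh']
        have : (-1:ℝ)^k * h - -(-1:ℝ)^k * h' = (-1:ℝ)^k * (h + h') := by ring
        rw [this, abs_mul, habs1, one_mul, abs_of_nonneg (by linarith)]
      refine le_trans ?_ (le_trans (le_of_eq hdy.symm) (le_max_right _ _))
      nlinarith

noncomputable def sP (R K : ℕ) : Finset (ℝ × ℝ) :=
  ((Finset.range K).sigma (fun k => Finset.range (R^k+1))).image (fun a => spt R K a.1 a.2)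

lemma mem_sP {R K : ℕ} {p : ℝ × ℝ} :
    p ∈ sP R K ↔ ∃ k, k < K ∧ ∃ j, j ≤ R^k ∧ p = spt R K k j := by
  unfold sP
  rw [Finset.mem_image]
  constructor
  · rintro ⟨a, ha, rfl⟩
    rw [Finset.mem_sigma, Finset.mem_range, Finset.mem_range] at ha
    exact ⟨a.1, ha.1, a.2, by omega, rfl⟩
  · rintro ⟨k, hk, j, hj, rfl⟩
    refine ⟨⟨k, j⟩, ?_, rfl⟩
    rw [Finset.mem_sigma, Finset.mem_range, Finset.mem_range]
    exact ⟨hk, Nat.lt_succ_of_le hj⟩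


section
variable {R K : ℕ}

/-- Sums over `sP` as double sums. -/
lemma sum_sP (hR : 2 ≤ R) (f : ℝ × ℝ → ℝ) :
    ∑ p ∈ sP R K, f p = ∑ k ∈ Finset.range K, ∑ j ∈ Finset.range (R^k+1), f (spt R K k j) := by
  unfold sP
  rw [Finset.sum_image]
  · rw [Finset.sum_sigma]
  · intro a ha b hb hab
    rw [Finset.mem_coe, Finset.mem_sigma, Finset.mem_range, Finset.mem_range] at ha hb
    obtain ⟨h1, h2⟩ := spt_inj hR ha.1 hb.1 hab
    obtain ⟨ka, ja⟩ := a
    obtain ⟨kb, jb⟩ := b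
    simp only at h1 h2
    subst h1; subst h2; rfl

lemma sum_abs_snd_ge (hR : 2 ≤ R) :
    (K:ℝ) * (R:ℝ)^(K-1) ≤ ∑ p ∈ sP R K, |p.2| := by
  rw [sum_sP hR]
  have : ∀ k ∈ Finset.range K,
      (R:ℝ)^(K-1) ≤ ∑ j ∈ Finset.range (R^k+1), |(spt R K k j).2| := by
    intro k hk
    rw [Finset.mem_range] at hk
    have : ∀ j ∈ Finset.range (R^k+1), |(spt R K k j).2| = (R:ℝ)^(K-1-k) :=
      fun j _ => spt_snd_abs R K k j
    rw [Finset.sum_congr rfl this, Finset.sum_const, Finset.card_range, nsmul_eq_mul]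
    have hccast : ((R^k + 1 : ℕ) : ℝ) = (R:ℝ)^k + 1 := by push_cast; ring
    rw [hccast]
    have hpk : (0:ℝ) < (R:ℝ)^(K-1-k) := by positivity
    have hpow : (R:ℝ)^k * (R:ℝ)^(K-1-k) = (R:ℝ)^(K-1) := by
      rw [← pow_add]
      congr 1
      omega
    nlinarith
  calc (K:ℝ) * (R:ℝ)^(K-1) = ∑ _k ∈ Finset.range K, (R:ℝ)^(K-1) := by
        rw [Finset.sum_const, Finset.card_range, nsmul_eq_mul]
    _ ≤ _ := Finset.sum_le_sum this
end

lemma abs_snd_le {R K : ℕ} (hR : 2 ≤ R) {p : ℝ × ℝ} (hp : p ∈ sP R K) :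
    |p.2| ≤ (R:ℝ)^(K-1) := by
  obtain ⟨k, hk, j, hj, rfl⟩ := mem_sP.mp hp
  rw [spt_snd_abs]
  exact pow_le_pow_right₀ (by exact_mod_cast Nat.one_le_of_lt hR) (by omega)

lemma two_le_card_sP {R K : ℕ} (hR : 2 ≤ R) (hK : 1 ≤ K) : 2 ≤ (sP R K).card := by
  rw [show (2:ℕ) = 1 + 1 by rfl]
  rw [Nat.succ_le_iff]
  rw [Finset.one_lt_card]
  refine ⟨spt R K (K-1) 0, ?_, spt R K (K-1) 1, ?_, ?_⟩
  · exact mem_sP.mpr ⟨K-1, by omega, 0, by positivity, rfl⟩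
  · exact mem_sP.mpr ⟨K-1, by omega, 1, Nat.one_le_iff_ne_zero.mpr (by positivity), rfl⟩
  · intro h
    have h1 := congrArg Prod.fst h
    unfold spt at h1
    simp only at h1
    have hp : (0:ℝ) < (R:ℝ)^(K-1-(K-1)) := by positivity
    rw [Nat.cast_zero, Nat.cast_one] at h1
    nlinarith

lemma pathLength_cons_cons (x y : ℝ × ℝ) (t : List (ℝ × ℝ)) :
    pathLength (x::y::t) = ptDist x y + pathLength (y::t) := by
  unfold pathLength
  rfl

lemma pathLength_singleton (x : ℝ × ℝ) : pathLength [x] = 0 := by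
  unfold pathLength
  rfl

lemma pathLength_ge (S : Finset (ℝ × ℝ)) (chg : ℝ × ℝ → ℝ)
    (hch : ∀ u ∈ S, ∀ v ∈ S, u ≠ v → chg u + chg v ≤ ptDist u v) :
    ∀ (l : List (ℝ × ℝ)) (x : ℝ × ℝ), (x::l).Nodup → (∀ p ∈ x::l, p ∈ S) →
      2*((x::l).map chg).sum - chg x - chg ((x::l).getLast (List.cons_ne_nil x l))
        ≤ pathLength (x::l) := by
  intro l
  induction l with
  | nil =>
    intro x _ _
    simp only [pathLength_singleton, List.map_cons, List.map_nil, List.sum_cons, List.sum_nil,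
      List.getLast_singleton]
    linarith
  | cons y t ih =>
    intro x hnd hmem
    have hxy : x ≠ y := by
      have := (List.nodup_cons.mp hnd).1
      intro he
      exact this (he ▸ List.mem_cons_self)
    have h1 : chg x + chg y ≤ ptDist x y :=
      hch x (hmem x List.mem_cons_self) y
        (hmem y (List.mem_cons_of_mem _ List.mem_cons_self)) hxy
    have h2 := ih y (List.nodup_cons.mp hnd).2
      (fun p hp => hmem p (List.mem_cons_of_mem _ hp))
    rw [pathLength_cons_cons]
    have hlast : (x::y::t).getLast (List.cons_ne_nil x (y::t))
        = (y::t).getLast (List.cons_ne_nil y t) := by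
      rw [List.getLast_cons (List.cons_ne_nil y t)]
    rw [hlast]
    simp only [List.map_cons, List.sum_cons] at *
    linarith

/-- Parent map. -/
noncomputable def sF (R K : ℕ) (p : ℝ × ℝ) : ℝ × ℝ :=
  if |p.2| = 1 then (if p.1 = 0 then p else (p.1 - 2, p.2)) else (p.1, (-1:ℝ)^(K-1))

noncomputable def sroot (R K : ℕ) : ℝ × ℝ := spt R K (K-1) 0

noncomputable def srk (p : ℝ × ℝ) : ℕ := 2*⌊p.1⌋₊ + (if |p.2| = 1 then 0 else 1)

section
variable {R K : ℕ}

lemma spt_fst_nat (R K k j : ℕ) : (spt R K k j).1 = ((2*j*R^(K-1-k) : ℕ) : ℝ) := by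
  unfold spt
  push_cast
  ring

lemma floor_spt (R K k j : ℕ) : ⌊(spt R K k j).1⌋₊ = 2*j*R^(K-1-k) := by
  rw [spt_fst_nat, Nat.floor_natCast]

lemma abs_one_of_last (hR : 2 ≤ R) {k : ℕ} (hk : k < K) :
    (|(spt R K k j).2| = 1 ↔ k = K - 1) := by
  rw [spt_snd_abs]
  constructor
  · intro h
    by_contra hne
    have h2 : 1 ≤ K - 1 - k := by omega
    have : (R:ℝ)^1 ≤ (R:ℝ)^(K-1-k) :=
      pow_le_pow_right₀ (by exact_mod_cast Nat.one_le_of_lt hR) h2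
    rw [pow_one] at this
    have : (2:ℝ) ≤ (R:ℝ) := by exact_mod_cast hR
    nlinarith [this]
  · intro h
    subst h
    rw [Nat.sub_self, pow_zero]

lemma sF_spt_last (R K : ℕ) {j : ℕ} (hR : 2 ≤ R) (hK : 1 ≤ K) (hj : 0 < j) :
    sF R K (spt R K (K-1) j) = spt R K (K-1) (j-1) := by
  have h1 : |(spt R K (K-1) j).2| = 1 := (abs_one_of_last hR (by omega)).mpr rfl
  unfold sF
  rw [if_pos h1]
  have hx : (spt R K (K-1) j).1 ≠ 0 := by
    rw [spt_fst_nat]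
    have : 0 < 2*j*R^(K-1-(K-1)) := by
      rw [Nat.sub_self, pow_zero]
      omega
    exact_mod_cast Nat.pos_iff_ne_zero.mp this
  rw [if_neg hx]
  unfold spt
  rw [Nat.sub_self, pow_zero]
  simp only [mul_one]
  have : (2:ℝ) * (j:ℝ) - 2 = 2 * ((j:ℝ) - 1) := by ring
  rw [Prod.mk.injEq]
  refine ⟨?_, rfl⟩
  rw [this, Nat.cast_sub hj]
  norm_num
lemma sF_spt_small (R K : ℕ) {k j : ℕ} (hR : 2 ≤ R) (hk : k < K - 1) :
    sF R K (spt R K k j) = spt R K (K-1) (j * R^(K-1-k)) := by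
  have h1 : |(spt R K k j).2| ≠ 1 := by
    rw [Ne, abs_one_of_last hR (by omega)]
    omega
  unfold sF
  rw [if_neg h1]
  unfold spt
  rw [Nat.sub_self, pow_zero]
  rw [Prod.mk.injEq]
  refine ⟨?_, by ring⟩
  push_cast
  ring

lemma sroot_eq : sroot R K = ((0:ℝ), (-1:ℝ)^(K-1)) := by
  unfold sroot spt
  rw [Nat.sub_self, pow_zero]
  norm_num

lemma sF_sroot : sF R K (sroot R K) = sroot R K := by
  rw [sroot_eq]
  unfold sF
  simp
end

section
variable {R K : ℕ}

lemma sF_mem (hR : 2 ≤ R) (hK : 1 ≤ K) {p : ℝ × ℝ} (hp : p ∈ sP R K) :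
    sF R K p ∈ sP R K := by
  obtain ⟨k, hk, j, hj, rfl⟩ := mem_sP.mp hp
  by_cases hlast : k = K - 1
  · subst hlast
    by_cases hj0 : j = 0
    · subst hj0
      have : sF R K (spt R K (K-1) 0) = spt R K (K-1) 0 := sF_sroot
      rw [this]
      exact hp
    · rw [sF_spt_last R K hR hK (Nat.pos_of_ne_zero hj0)]
      exact mem_sP.mpr ⟨K-1, by omega, j-1, by omega, rfl⟩
  · have hklt : k < K - 1 := by omega
    rw [sF_spt_small R K hR hklt]
    refine mem_sP.mpr ⟨K-1, by omega, j * R^(K-1-k), ?_, rfl⟩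
    calc j * R^(K-1-k) ≤ R^k * R^(K-1-k) := Nat.mul_le_mul_right _ hj
      _ = R^(K-1) := by rw [← pow_add]; congr 1; omega

lemma srk_spt (hR : 2 ≤ R) {k j : ℕ} (hk : k < K) :
    srk (spt R K k j) = 4*j*R^(K-1-k) + (if k = K - 1 then 0 else 1) := by
  unfold srk
  rw [floor_spt]
  by_cases h : k = K - 1
  · rw [if_pos ((abs_one_of_last hR hk).mpr h), if_pos h]
    ring
  · rw [if_neg (fun hc => h ((abs_one_of_last hR hk).mp hc)), if_neg h]
    ring

lemma srk_sF_lt (hR : 2 ≤ R) (hK : 1 ≤ K) {p : ℝ × ℝ} (hp : p ∈ sP R K)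
    (hne : p ≠ sroot R K) : srk (sF R K p) < srk p := by
  obtain ⟨k, hk, j, hj, rfl⟩ := mem_sP.mp hp
  by_cases hlast : k = K - 1
  · subst hlast
    by_cases hj0 : j = 0
    · exact absurd (hj0 ▸ rfl) hne
    · rw [sF_spt_last R K hR hK (Nat.pos_of_ne_zero hj0),
        srk_spt hR (by omega), srk_spt hR (by omega)]
      simp only [if_pos rfl]
      have : 0 < R^(K-1-(K-1)) := Nat.pow_pos (by omega)
      have hj1 : j - 1 < j := by omega
      have h5 := (Nat.mul_lt_mul_right this).mpr (show 4*(j-1) < 4*j by omega)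
      omega
  · have hklt : k < K - 1 := by omega
    rw [sF_spt_small R K hR hklt, srk_spt hR (by omega), srk_spt hR (by omega)]
    rw [if_pos rfl, if_neg hlast]
    have : 4 * (j * R^(K-1-k)) * R^(K-1-(K-1)) = 4*j*R^(K-1-k) := by
      rw [Nat.sub_self, pow_zero]
      ring
    omega

lemma ptDist_self (p : ℝ × ℝ) : ptDist p p = 0 := by
  unfold ptDist
  simp

lemma ptDist_sF_le (hR : 2 ≤ R) (hK : 1 ≤ K) {k j : ℕ} (hk : k < K) (hj : j ≤ R^k) :
    ptDist (spt R K k j) (sF R K (spt R K k j)) ≤ (R:ℝ)^(K-1-k) + 1 := by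
  have hp1 : (0:ℝ) ≤ (R:ℝ)^(K-1-k) := by positivity
  by_cases hlast : k = K - 1
  · subst hlast
    by_cases hj0 : j = 0
    · subst hj0
      rw [show sF R K (spt R K (K-1) 0) = spt R K (K-1) 0 from sF_sroot, ptDist_self]
      linarith
    · rw [sF_spt_last R K hR hK (Nat.pos_of_ne_zero hj0)]
      unfold ptDist spt
      rw [Nat.sub_self, pow_zero]
      simp only [mul_one]
      apply max_le
      · rw [Nat.cast_sub (Nat.pos_of_ne_zero hj0)]
        push_cast
        rw [show (2*(j:ℝ) - 2*((j:ℝ)-1)) = 2 by ring, abs_two]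
        norm_num
      · simp only [sub_self, abs_zero]
        positivity
  · have hklt : k < K - 1 := by omega
    rw [sF_spt_small R K hR hklt]
    unfold ptDist spt
    rw [Nat.sub_self, pow_zero]
    apply max_le
    · have : 2*(j:ℝ)*(R:ℝ)^(K-1-k) - 2*((j * R^(K-1-k) : ℕ):ℝ)*1 = 0 := by
        push_cast
        ring
      rw [this, abs_zero]
      positivity
    · refine le_trans (abs_sub _ _) ?_
      rw [mul_one, abs_mul, abs_mul, abs_pow, abs_pow, abs_neg, abs_one, one_pow,
        abs_of_nonneg (by positivity : (0:ℝ) ≤ (R:ℝ))]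
      simp

lemma nat_geom_le (hR : 2 ≤ R) : ∀ {K : ℕ}, 1 ≤ K → ∑ k ∈ Finset.range K, R^k ≤ 2*R^(K-1) := by
  intro K
  induction K with
  | zero => omega
  | succ n ih =>
    intro _
    by_cases hn : n = 0
    · subst hn
      simp
    · rw [Finset.sum_range_succ]
      have h1 := ih (by omega)
      have h2 : 2*R^(n-1) ≤ R^n := by
        calc 2*R^(n-1) ≤ R*R^(n-1) := Nat.mul_le_mul_right _ hR
          _ = R^n := by rw [← pow_succ']; congr 1; omega
      have h3 : (n+1) - 1 = n := by omega
      rw [h3]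
      omega

lemma sum_ptDist_sF_le (hR : 2 ≤ R) (hK : 1 ≤ K) :
    ∑ p ∈ sP R K, ptDist p (sF R K p) ≤ ((K:ℝ)+5) * (R:ℝ)^(K-1) := by
  rw [sum_sP hR]
  have step1 : ∀ k ∈ Finset.range K,
      ∑ j ∈ Finset.range (R^k+1), ptDist (spt R K k j) (sF R K (spt R K k j))
        ≤ (R:ℝ)^(K-1) + (R:ℝ)^k + (R:ℝ)^(K-1-k) + 1 := by
    intro k hk
    rw [Finset.mem_range] at hk
    have : ∀ j ∈ Finset.range (R^k+1),
        ptDist (spt R K k j) (sF R K (spt R K k j)) ≤ (R:ℝ)^(K-1-k) + 1 := by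
      intro j hj
      rw [Finset.mem_range] at hj
      exact ptDist_sF_le hR hK hk (by omega)
    refine le_trans (Finset.sum_le_sum this) ?_
    rw [Finset.sum_const, Finset.card_range, nsmul_eq_mul]
    have hcast : ((R^k + 1 : ℕ) : ℝ) = (R:ℝ)^k + 1 := by push_cast; ring
    rw [hcast]
    have hpow : (R:ℝ)^k * (R:ℝ)^(K-1-k) = (R:ℝ)^(K-1) := by
      rw [← pow_add]; congr 1; omega
    nlinarith [hpow]
  refine le_trans (Finset.sum_le_sum step1) ?_
  rw [Finset.sum_add_distrib, Finset.sum_add_distrib, Finset.sum_add_distrib]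
  have e1 : ∑ _k ∈ Finset.range K, (R:ℝ)^(K-1) = (K:ℝ) * (R:ℝ)^(K-1) := by
    rw [Finset.sum_const, Finset.card_range, nsmul_eq_mul]
  have e4 : ∑ _k ∈ Finset.range K, (1:ℝ) = (K:ℝ) := by
    rw [Finset.sum_const, Finset.card_range, nsmul_eq_mul, mul_one]
  have hgeom : ∑ k ∈ Finset.range K, (R:ℝ)^k ≤ 2*(R:ℝ)^(K-1) := by
    have := nat_geom_le hR hK
    have hcast : ((∑ k ∈ Finset.range K, R^k : ℕ) : ℝ) ≤ ((2*R^(K-1) : ℕ) : ℝ) := by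
      exact_mod_cast this
    push_cast at hcast
    exact hcast
  have hrefl : ∑ k ∈ Finset.range K, (R:ℝ)^(K-1-k) = ∑ k ∈ Finset.range K, (R:ℝ)^k :=
    Finset.sum_range_reflect (fun i => (R:ℝ)^i) K
  have hKle : (K:ℝ) ≤ (R:ℝ)^(K-1) := by
    have h1 : K - 1 < 2^(K-1) := Nat.lt_two_pow_self
    have h2 : 2^(K-1) ≤ R^(K-1) := Nat.pow_le_pow_left hR _
    have : K ≤ R^(K-1) := by omega
    exact_mod_cast this
  rw [e1, e4, hrefl]
  nlinarith [hgeom, hKle]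
end


lemma weightOf_nonneg {V : Type*} [Fintype V] (G : SimpleGraph V) (w : V → V → ℝ)
    (hw : ∀ u v, 0 ≤ w u v) : 0 ≤ weightOf G w := by
  unfold weightOf
  apply div_nonneg _ (by norm_num)
  apply Finset.sum_nonneg
  intro u _
  apply Finset.sum_nonneg
  intro v _
  split
  · exact hw u v
  · exact le_rfl

lemma pathLength_nonneg (l : List (ℝ × ℝ)) : 0 ≤ pathLength l := by
  unfold pathLength
  apply List.sum_nonneg
  intro x hx
  rw [List.mem_map] at hx
  obtain ⟨pq, _, rfl⟩ := hx
  exact ptDist_nonneg _ _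

lemma charge_full {R K : ℕ} (hR : 2 ≤ R) {u v : ℝ × ℝ} (hu : u ∈ sP R K) (hv : v ∈ sP R K)
    (huv : u ≠ v) :
    (1 - 2/(R:ℝ)^2) * |u.2| + (1 - 2/(R:ℝ)^2) * |v.2| ≤ ptDist u v := by
  obtain ⟨k, hk, j, hj, rfl⟩ := mem_sP.mp hu
  obtain ⟨k', hk', j', hj', rfl⟩ := mem_sP.mp hv
  rw [← mul_add]
  rcases le_total k k' with hkk | hkk
  · exact charge_ordered hR hkk hk' huv
  · rw [ptDist_comm, add_comm]
    exact charge_ordered hR hkk hk (Ne.symm huv)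

/-- For every `ε > 0` there is a finite set `P` of at least two points of `ℝ²` such that,
with the L∞ distance, every Hamiltonian path on `P` (an enumeration of `P` without
repetition) has length at least `(2 − ε)` times the weight of any minimum spanning tree
of `P`. -/
theorem stmt15 (ε : ℝ) (hε : 0 < ε) :
    ∃ P : Finset (ℝ × ℝ), 2 ≤ P.card ∧
      ∀ Tmin : SimpleGraph P, Tmin.IsTree →
        (∀ T'' : SimpleGraph P, T''.IsTree →
          weightOf Tmin (fun p q => ptDist p.1 q.1) ≤
            weightOf T'' (fun p q => ptDist p.1 q.1)) →
        ∀ l : List (ℝ × ℝ), l.Nodup → l.toFinset = P →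
          (2 - ε) * weightOf Tmin (fun p q => ptDist p.1 q.1) ≤ pathLength l := by
  obtain ⟨r₀, hr₀⟩ := exists_nat_ge (8/ε)
  obtain ⟨m₀, hm₀⟩ := exists_nat_ge (24/ε)
  set R : ℕ := r₀ + 2 with hRdef
  set K : ℕ := m₀ + 3 with hKdef
  have hR : 2 ≤ R := by omega
  have hK : 1 ≤ K := by omega
  have hR1 : (1:ℝ) ≤ (R:ℝ) := by exact_mod_cast Nat.one_le_of_lt hR
  have hR2cast : (2:ℝ) ≤ (R:ℝ) := by exact_mod_cast hR
  have hRsq : (0:ℝ) < (R:ℝ)^2 := by positivity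
  have hpowpos : (0:ℝ) < (R:ℝ)^(K-1) := by positivity
  have hγ0 : (0:ℝ) ≤ 1 - 2/(R:ℝ)^2 := by
    rw [sub_nonneg, div_le_one hRsq]
    nlinarith
  have hγ1 : (1:ℝ) - 2/(R:ℝ)^2 ≤ 1 := by
    have : (0:ℝ) ≤ 2/(R:ℝ)^2 := by positivity
    linarith
  -- the two key parameter inequalities
  have hεR : (8:ℝ) ≤ ε * (R:ℝ)^2 := by
    have h1 : 8/ε ≤ (R:ℝ) := le_trans hr₀ (by exact_mod_cast Nat.le_add_right r₀ 2)
    have h2 : (8:ℝ) ≤ ε * (R:ℝ) := by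
      rw [div_le_iff₀ hε] at h1
      linarith
    calc (8:ℝ) ≤ ε * (R:ℝ) := h2
      _ ≤ ε * (R:ℝ)^2 := by nlinarith
  have hεK : (24:ℝ) ≤ ε * (K:ℝ) := by
    have h1 : 24/ε ≤ (K:ℝ) := le_trans hm₀ (by exact_mod_cast Nat.le_add_right m₀ 3)
    rw [div_le_iff₀ hε] at h1
    linarith
  refine ⟨sP R K, two_le_card_sP hR hK, ?_⟩
  intro Tmin htree hmin l hnd htf
  -- the explicit spanning tree
  have hrootmem : sroot R K ∈ sP R K := mem_sP.mpr ⟨K-1, by omega, 0, Nat.zero_le _, rfl⟩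
  set par : ↥(sP R K) → ↥(sP R K) := fun p => ⟨sF R K p.1, sF_mem hR hK p.2⟩ with hpar
  set rt : ↥(sP R K) := ⟨sroot R K, hrootmem⟩ with hrt
  have hparrt : par rt = rt := Subtype.ext sF_sroot
  have hdec : ∀ v : ↥(sP R K), v ≠ rt → srk ((par v).1) < srk v.1 := by
    intro v hv
    exact srk_sF_lt hR hK v.2 (fun hc => hv (Subtype.ext hc))
  have htree'' : (parentGraph par).IsTree :=
    parentGraph_isTree par (fun p => srk p.1) rt hparrt hdec
  -- weight of the minimum tree is at most that of the explicit tree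
  have hWle : weightOf Tmin (fun p q => ptDist p.1 q.1) ≤ ((K:ℝ)+5) * (R:ℝ)^(K-1) := by
    refine le_trans (hmin (parentGraph par) htree'') ?_
    refine le_trans (weightOf_parentGraph_le par _ (fun u v => ptDist_nonneg _ _)
      (fun u v => ptDist_comm _ _)) ?_
    have : (∑ v : ↥(sP R K), ptDist v.1 ((par v).1))
        = ∑ p ∈ sP R K, ptDist p (sF R K p) := by
      exact Finset.sum_coe_sort (sP R K) (fun p => ptDist p (sF R K p))
    rw [this]
    exact sum_ptDist_sF_le hR hK
  -- lower bound for the Hamiltonian path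
  have hlnil : l ≠ [] := by
    intro hl
    rw [hl] at htf
    have := two_le_card_sP (R := R) (K := K) hR hK
    rw [← htf] at this
    simp at this
  obtain ⟨x, t, rfl⟩ := List.exists_cons_of_ne_nil hlnil
  set chg : ℝ × ℝ → ℝ := fun p => (1 - 2/(R:ℝ)^2) * |p.2| with hchg
  have hmem : ∀ p ∈ x::t, p ∈ sP R K := by
    intro p hp
    rw [← htf]
    exact List.mem_toFinset.mpr hp
  have hch : ∀ u ∈ sP R K, ∀ v ∈ sP R K, u ≠ v → chg u + chg v ≤ ptDist u v :=
    fun u hu v hv huv => charge_full hR hu hv huv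
  have hpath := pathLength_ge (sP R K) chg hch t x hnd hmem
  have hsum : ((x::t).map chg).sum = ∑ p ∈ sP R K, chg p := by
    rw [← htf]
    exact (List.sum_toFinset chg hnd).symm
  have hsumge : (1 - 2/(R:ℝ)^2) * ((K:ℝ) * (R:ℝ)^(K-1)) ≤ ∑ p ∈ sP R K, chg p := by
    rw [hchg]
    rw [← Finset.mul_sum]
    exact mul_le_mul_of_nonneg_left (sum_abs_snd_ge hR) hγ0
  have hchx : chg x ≤ (1 - 2/(R:ℝ)^2) * (R:ℝ)^(K-1) :=
    mul_le_mul_of_nonneg_left (abs_snd_le hR (hmem x List.mem_cons_self)) hγ0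
  have hchlast : chg ((x::t).getLast (List.cons_ne_nil x t)) ≤ (1 - 2/(R:ℝ)^2) * (R:ℝ)^(K-1) :=
    mul_le_mul_of_nonneg_left
      (abs_snd_le hR (hmem _ (List.getLast_mem (List.cons_ne_nil x t)))) hγ0
  have hPL : (1 - 2/(R:ℝ)^2) * (2*(K:ℝ) - 2) * (R:ℝ)^(K-1) ≤ pathLength (x::t) := by
    rw [hsum] at hpath
    have : (1 - 2/(R:ℝ)^2) * (2*(K:ℝ) - 2) * (R:ℝ)^(K-1)
        ≤ 2*(∑ p ∈ sP R K, chg p) - chg x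
          - chg ((x::t).getLast (List.cons_ne_nil x t)) := by
      have e1 : (1 - 2/(R:ℝ)^2) * (2*(K:ℝ) - 2) * (R:ℝ)^(K-1)
          = 2*((1 - 2/(R:ℝ)^2) * ((K:ℝ) * (R:ℝ)^(K-1)))
            - (1 - 2/(R:ℝ)^2) * (R:ℝ)^(K-1) - (1 - 2/(R:ℝ)^2) * (R:ℝ)^(K-1) := by ring
      rw [e1]
      linarith
    linarith
  -- final arithmetic
  rcases le_or_gt (2 - ε) 0 with hneg | hpos
  · have h1 : (0:ℝ) ≤ weightOf Tmin (fun p q => ptDist p.1 q.1) :=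
      weightOf_nonneg _ _ (fun u v => ptDist_nonneg _ _)
    have h2 : (2 - ε) * weightOf Tmin (fun p q => ptDist p.1 q.1) ≤ 0 :=
      mul_nonpos_of_nonpos_of_nonneg hneg h1
    exact le_trans h2 (pathLength_nonneg _)
  · have harith : (2 - ε) * (((K:ℝ)+5) * (R:ℝ)^(K-1))
        ≤ (1 - 2/(R:ℝ)^2) * (2*(K:ℝ) - 2) * (R:ℝ)^(K-1) := by
      have hKpos : (0:ℝ) < (K:ℝ) := by
        have : 0 < K := by omega
        exact_mod_cast this
      have hd : (2/(R:ℝ)^2) * (R:ℝ)^2 = 2 := div_mul_cancel₀ 2 (ne_of_gt hRsq)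
      have hdK : 2 * (2/(R:ℝ)^2) * (K:ℝ) ≤ ε * (K:ℝ) / 2 := by
        rw [div_le_iff₀ hε] at hr₀
        have h8 : (8:ℝ) ≤ ε * (R:ℝ)^2 := hεR
        have hd0 : (0:ℝ) ≤ 2/(R:ℝ)^2 := by positivity
        rw [← mul_le_mul_iff_of_pos_right hRsq]
        calc 2 * (2/(R:ℝ)^2) * (K:ℝ) * (R:ℝ)^2
            = 4 * (K:ℝ) * ((2/(R:ℝ)^2) * (R:ℝ)^2) / 2 := by ring
          _ = 4 * (K:ℝ) := by rw [hd]; ring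
          _ ≤ ε * (K:ℝ) / 2 * (R:ℝ)^2 := by nlinarith
      have key : (2 - ε) * ((K:ℝ)+5) ≤ (1 - 2/(R:ℝ)^2) * (2*(K:ℝ) - 2) := by
        have hd0 : (0:ℝ) ≤ 2/(R:ℝ)^2 := by positivity
        nlinarith
      calc (2 - ε) * (((K:ℝ)+5) * (R:ℝ)^(K-1))
          = ((2 - ε) * ((K:ℝ)+5)) * (R:ℝ)^(K-1) := by ring
        _ ≤ ((1 - 2/(R:ℝ)^2) * (2*(K:ℝ) - 2)) * (R:ℝ)^(K-1) :=
            mul_le_mul_of_nonneg_right key (le_of_lt hpowpos)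
        _ = (1 - 2/(R:ℝ)^2) * (2*(K:ℝ) - 2) * (R:ℝ)^(K-1) := by ring
    have h1 : (2 - ε) * weightOf Tmin (fun p q => ptDist p.1 q.1)
        ≤ (2 - ε) * (((K:ℝ)+5) * (R:ℝ)^(K-1)) :=
      mul_le_mul_of_nonneg_left hWle (le_of_lt hpos)
    exact le_trans h1 (le_trans harith hPL)
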